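/- If f : T_q × D → ℂ is almost periodic in t uniformly in x ∈ D, then for every compact subset S of D the function f is bounded on T_q × S and uniformly continuous on T_q × S (with respect to the metric inherited from ℝ × ℂ). -/

import Mathlib

open Filter Topology

/-- The quantum time scale `T_q = {q^n : n ∈ ℤ} ∪ {0}`. -/
def Tq (q : ℝ) : Set ℝ := {t : ℝ | (∃ n : ℤ, t = q ^ n) ∨ t = 0}

/-- `f : T_q × D → ℂ` is almost periodic in `t ∈ T_q` uniformly in `x ∈ D`. -/
def APUnif (q : ℝ) (D : Set ℂ) (f : ℝ → ℂ → ℂ) : Prop :=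
  ContinuousOn (fun p : ℝ × ℂ => f p.1 p.2) (Tq q ×ˢ D) ∧
  ∀ ε : ℝ, 0 < ε → ∀ S : Set ℂ, S ⊆ D → IsCompact S →
    ∃ ℓ : ℕ, 0 < ℓ ∧ ∀ p : ℤ, ∃ τ : ℤ, p ≤ τ ∧ τ ≤ p + ℓ ∧
      ∀ t ∈ Tq q, ∀ x ∈ S, ‖f (q ^ τ * t) x - f t x‖ < ε

/-- Gap lemma: if `t' ∈ T_q` and `t' < q^n`, then `t' ≤ q^(n-1)`. -/
lemma Tq_gap {q : ℝ} (hq : 1 < q) {t' : ℝ} (ht' : t' ∈ Tq q) {n : ℤ}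
    (h : t' < q ^ n) : t' ≤ q ^ (n - 1) := by
  have hq0 : (0 : ℝ) < q := lt_trans one_pos hq
  rcases ht' with ⟨m, rfl⟩ | rfl
  · have hmn : m < n := (zpow_lt_zpow_iff_right₀ hq).mp h
    exact zpow_le_zpow_right₀ hq.le (by omega)
  · positivity

/-- Distinct points of `T_q` that are close must both be `≤ 1`. -/
lemma Tq_close {q : ℝ} (hq : 1 < q) {t t' : ℝ} (ht : t ∈ Tq q) (ht' : t' ∈ Tq q)
    (hlt : t' < t) (hd : t - t' < (q - 1) / q) : t ≤ 1 := by
  have hq0 : (0 : ℝ) < q := lt_trans one_pos hq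
  by_contra h
  push_neg at h
  rcases ht with ⟨n, rfl⟩ | rfl
  · have hgap : t' ≤ q ^ (n - 1) := Tq_gap hq ht' hlt
    have h1 : q ^ (n-1) = q ^ n / q := by
      rw [zpow_sub₀ (ne_of_gt hq0), zpow_one]
    have h2 : q ^ n - q ^ n / q = q ^ n * ((q - 1) / q) := by field_simp
    have h3 : (q - 1)/ q ≤ q ^ n * ((q-1)/q) := by
      nlinarith [zpow_pos hq0 n, div_pos (sub_pos.mpr hq) hq0]
    nlinarith
  · linarith

/-- Key auxiliary: a compact `K ⊆ T_q` containing all small points of `T_q`, such that every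
point of `T_q` has an `ε`-translate in `K`. -/
lemma Tq_aux {q : ℝ} (hq : 1 < q) {D : Set ℂ} {f : ℝ → ℂ → ℂ} (hf : APUnif q D f)
    {S : Set ℂ} (hS : S ⊆ D) (hc : IsCompact S) {ε : ℝ} (hε : 0 < ε) :
    ∃ K : Set ℝ, IsCompact K ∧ K ⊆ Tq q ∧ (∀ t ∈ Tq q, t ≤ 1 → t ∈ K) ∧
      ∀ t ∈ Tq q, ∃ s ∈ K, ∀ x ∈ S, ‖f s x - f t x‖ < ε := by
  have hq0 : (0 : ℝ) < q := lt_trans one_pos hq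
  obtain ⟨ℓ, hℓ, H⟩ := hf.2 ε hε S hS hc
  refine ⟨insert 0 (Set.range fun j : ℕ => q ^ ((ℓ : ℤ) - j)), ?_, ?_, ?_, ?_⟩
  · apply Filter.Tendsto.isCompact_insert_range
    have : (fun j : ℕ => q ^ ((ℓ : ℤ) - j)) = fun j : ℕ => q ^ (ℓ : ℤ) * (q⁻¹) ^ j := by
      funext j
      rw [zpow_sub₀ (ne_of_gt hq0), div_eq_mul_inv, ← inv_zpow, zpow_natCast q⁻¹ j]
    rw [this]
    have h0 : Tendsto (fun j : ℕ => (q⁻¹) ^ j) atTop (𝓝 0) :=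
      tendsto_pow_atTop_nhds_zero_of_lt_one (by positivity) (inv_lt_one_of_one_lt₀ hq)
    simpa using h0.const_mul (q ^ (ℓ : ℤ))
  · rintro x (rfl | ⟨j, rfl⟩)
    · exact Or.inr rfl
    · exact Or.inl ⟨_, rfl⟩
  · rintro t (⟨n, rfl⟩ | rfl) h1
    · have hn : n ≤ 0 := by
        have := (zpow_le_zpow_iff_right₀ hq (n := 0)).mp (by simpa using h1)
        simpa using this
      refine Or.inr ⟨((ℓ:ℤ) - n).toNat, ?_⟩
      show q ^ ((ℓ:ℤ) - ((((ℓ:ℤ) - n).toNat : ℕ) : ℤ)) = q ^ n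
      have h2 : (ℓ:ℤ) - ((((ℓ:ℤ) - n).toNat : ℕ) : ℤ) = n := by omega
      rw [h2]
    · exact Or.inl rfl
  · rintro t ht
    rcases ht with ⟨n, rfl⟩ | rfl
    · obtain ⟨τ, h1, h2, h3⟩ := H (-n)
      have h2 : ((ℓ:ℤ) - (((((ℓ:ℤ) - (τ + n)).toNat : ℕ)) : ℤ)) = τ + n := by omega
      refine ⟨q ^ (τ + n), Or.inr ⟨((ℓ:ℤ) - (τ + n)).toNat,
        show q ^ ((ℓ:ℤ) - (((((ℓ:ℤ) - (τ + n)).toNat : ℕ)) : ℤ)) = q ^ (τ + n) from by rw [h2]⟩,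
        fun x hx => ?_⟩
      have := h3 (q ^ n) (Or.inl ⟨n, rfl⟩) x hx
      rwa [← zpow_add₀ (ne_of_gt hq0)] at this
    · exact ⟨0, Or.inl rfl, fun x hx => by simpa using hε⟩

/-- If `f` is almost periodic in `t` uniformly in `x ∈ D`, then for every compact subset
`S ⊆ D` the function `f` is bounded on `T_q × S` and uniformly continuous on `T_q × S`. -/
theorem stmt_0 (q : ℝ) (hq : 1 < q) (D : Set ℂ) (hD : IsOpen D)
    (f : ℝ → ℂ → ℂ) (hf : APUnif q D f) :
    ∀ S : Set ℂ, S ⊆ D → IsCompact S →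
      (∃ M : ℝ, ∀ t ∈ Tq q, ∀ x ∈ S, ‖f t x‖ ≤ M) ∧
      UniformContinuousOn (fun p : ℝ × ℂ => f p.1 p.2) (Tq q ×ˢ S) := by
  intro S hSD hScpt
  have hq0 : (0 : ℝ) < q := lt_trans one_pos hq
  constructor
  · -- boundedness
    obtain ⟨K, hKc, hKT, -, htr⟩ := Tq_aux hq hf hSD hScpt one_pos
    have hsub : K ×ˢ S ⊆ Tq q ×ˢ D := Set.prod_mono hKT hSD
    obtain ⟨C, hC⟩ := (hKc.prod hScpt).exists_bound_of_continuousOn (hf.1.mono hsub)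
    refine ⟨C + 1, fun t ht x hx => ?_⟩
    obtain ⟨s, hsK, hst⟩ := htr t ht
    have h1 : ‖f t x‖ ≤ ‖f s x‖ + ‖f t x - f s x‖ := by
      simpa using norm_add_le (f s x) (f t x - f s x)
    have h2 : ‖f t x - f s x‖ < 1 := by
      rw [norm_sub_rev]; exact hst x hx
    have h3 : ‖f s x‖ ≤ C := by
      have := hC (s, x) ⟨hsK, hx⟩
      simpa using this
    linarith
  · -- uniform continuity
    rw [Metric.uniformContinuousOn_iff]
    intro ε hε
    obtain ⟨K, hKc, hKT, hK1, htr⟩ := Tq_aux hq hf hSD hScpt (show (0:ℝ) < ε/3 by linarith)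
    have hsub : K ×ˢ S ⊆ Tq q ×ˢ D := Set.prod_mono hKT hSD
    have hUC := (hKc.prod hScpt).uniformContinuousOn_of_continuous (hf.1.mono hsub)
    obtain ⟨δ₀, hδ₀, hδ⟩ := Metric.uniformContinuousOn_iff.mp hUC (ε/3) (by linarith)
    refine ⟨min δ₀ ((q - 1) / q), lt_min hδ₀ (div_pos (by linarith) hq0), ?_⟩
    rintro ⟨t, x⟩ ⟨ht, hx⟩ ⟨t', x'⟩ ⟨ht', hx'⟩ hdist
    rw [Prod.dist_eq, max_lt_iff] at hdist
    obtain ⟨hdt, hdx⟩ := hdist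
    by_cases hte : t = t'
    · subst hte
      obtain ⟨s, hsK, hst⟩ := htr t ht
      have h1 : dist (f t x) (f s x) < ε/3 := by
        rw [Complex.dist_eq, norm_sub_rev]
        exact hst x hx
      have h2 : dist (f s x) (f s x') < ε/3 := by
        have := hδ (s, x) ⟨hsK, hx⟩ (s, x') ⟨hsK, hx'⟩
          (by rw [Prod.dist_eq, max_lt_iff]
              exact ⟨by simpa using hδ₀, lt_of_lt_of_le hdx (min_le_left _ _)⟩)
        simpa using this
      have h3 : dist (f s x') (f t x') < ε/3 := by
        rw [Complex.dist_eq]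
        exact hst x' hx'
      calc dist (f t x) (f t x')
          ≤ dist (f t x) (f s x) + dist (f s x) (f s x') + dist (f s x') (f t x') :=
            dist_triangle4 _ _ _ _
        _ < ε := by linarith
    · -- distinct times: both must be small, hence in K
      have habs : |t - t'| < (q-1)/q := by
        rw [← Real.dist_eq]
        exact lt_of_lt_of_le hdt (min_le_right _ _)
      have hboth : t ≤ 1 ∧ t' ≤ 1 := by
        rcases lt_trichotomy t' t with h | h | h
        · refine ⟨Tq_close hq ht ht' h (lt_of_le_of_lt (le_abs_self _) habs), ?_⟩
          exact le_trans h.le (Tq_close hq ht ht' h (lt_of_le_of_lt (le_abs_self _) habs))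
        · exact absurd h.symm hte
        · have h1 : t' ≤ 1 := Tq_close hq ht' ht h
            (by rw [abs_sub_comm] at habs; exact lt_of_le_of_lt (le_abs_self _) habs)
          exact ⟨le_trans h.le h1, h1⟩
      have htK : t ∈ K := hK1 t ht hboth.1
      have htK' : t' ∈ K := hK1 t' ht' hboth.2
      have := hδ (t, x) ⟨htK, hx⟩ (t', x') ⟨htK', hx'⟩
        (by rw [Prod.dist_eq, max_lt_iff]
            exact ⟨lt_of_lt_of_le hdt (min_le_left _ _), lt_of_lt_of_le hdx (min_le_left _ _)⟩)
      exact lt_trans this (by linarith)
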